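/- Let W be the ℂ-submodule of Matrix (Fin N) (Fin N) ℂ consisting of antisymmetric matrices, i.e. those A with Aᵀ = −A. Then: (i) W has finite rank N(N−1)/2; and (ii) for every U ∈ SU(N), the map A ↦ (U : Matrix (Fin N) (Fin N) ℂ) * A * (U : Matrix (Fin N) (Fin N) ℂ)ᵀ sends W into W, and the induced ℂ-linear endomorphism of W has determinant (LinearMap.det) equal to 1. (Hence the two-index antisymmetric representation of SU(N) again has determinant one, so its totally antisymmetric top power furnishes a singlet, as used in the alternative large-N extrapolation of baryons.) -/

import Mathlib

open Matrix

/-- The submodule of antisymmetric `N × N` complex matrices (`Aᵀ = -A`). -/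
noncomputable def antisymMat (N : ℕ) : Submodule ℂ (Matrix (Fin N) (Fin N) ℂ) where
  carrier := {A | Aᵀ = -A}
  zero_mem' := by simp
  add_mem' := by
    intro A B hA hB
    simp only [Set.mem_setOf_eq] at *
    rw [Matrix.transpose_add, hA, hB, neg_add]
  smul_mem' := by
    intro c A hA
    simp only [Set.mem_setOf_eq] at *
    rw [Matrix.transpose_smul, hA, smul_neg]

/-- The linear map `A ↦ U * A * Uᵀ` on matrices. -/
noncomputable def conjT (N : ℕ) (U : Matrix (Fin N) (Fin N) ℂ) :
    Matrix (Fin N) (Fin N) ℂ →ₗ[ℂ] Matrix (Fin N) (Fin N) ℂ :=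
  (LinearMap.mulLeft ℂ U) ∘ₗ (LinearMap.mulRight ℂ Uᵀ)

namespace AntisymAux

lemma conjT_apply (N : ℕ) (U A : Matrix (Fin N) (Fin N) ℂ) :
    conjT N U A = U * A * Uᵀ := by
  simp [conjT, Matrix.mul_assoc]

lemma mem_antisym (N : ℕ) {A : Matrix (Fin N) (Fin N) ℂ} (h : A ∈ antisymMat N) :
    Aᵀ = -A := h

lemma conjT_mem (N : ℕ) (U : Matrix (Fin N) (Fin N) ℂ) :
    ∀ x ∈ antisymMat N, conjT N U x ∈ antisymMat N := by
  intro A hA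
  have hA' : Aᵀ = -A := hA
  show (conjT N U A)ᵀ = -(conjT N U A)
  rw [conjT_apply, Matrix.transpose_mul, Matrix.transpose_mul,
    Matrix.transpose_transpose, hA']
  rw [Matrix.neg_mul, Matrix.mul_neg, Matrix.mul_assoc]

/-- The representation on antisymmetric matrices. -/
noncomputable def rep (N : ℕ) (U : Matrix (Fin N) (Fin N) ℂ) :
    antisymMat N →ₗ[ℂ] antisymMat N :=
  (conjT N U).restrict (conjT_mem N U)

lemma rep_mul (N : ℕ) (U V : Matrix (Fin N) (Fin N) ℂ) :
    rep N (U * V) = rep N U ∘ₗ rep N V := by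
  apply LinearMap.ext; intro x
  apply Subtype.ext
  show ((rep N (U * V)) x : Matrix (Fin N) (Fin N) ℂ) = ((rep N U) ((rep N V) x) : _)
  simp only [rep, LinearMap.restrict_apply, conjT_apply]
  rw [Matrix.transpose_mul]
  noncomm_ring

lemma rep_one (N : ℕ) : rep N 1 = LinearMap.id := by
  apply LinearMap.ext; intro x
  apply Subtype.ext
  show ((rep N 1) x : Matrix (Fin N) (Fin N) ℂ) = (x : _)
  simp [rep, LinearMap.restrict_apply, conjT_apply]

/-- The determinant of the induced endomorphism. -/
noncomputable def D (N : ℕ) (U : Matrix (Fin N) (Fin N) ℂ) : ℂ :=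
  LinearMap.det (rep N U)

lemma D_mul (N : ℕ) (U V : Matrix (Fin N) (Fin N) ℂ) :
    D N (U * V) = D N U * D N V := by
  rw [D, D, D, rep_mul, LinearMap.det_comp]

lemma D_one (N : ℕ) : D N 1 = 1 := by
  rw [D, rep_one, LinearMap.det_id]

/-! ### The basis of antisymmetric matrices -/

abbrev Idx (N : ℕ) := {p : Fin N × Fin N // p.1 < p.2}

def ofFun {N : ℕ} (f : Idx N → ℂ) : Matrix (Fin N) (Fin N) ℂ :=
  Matrix.of fun i j =>
    if h : i < j then f ⟨(i, j), h⟩ else if h : j < i then -f ⟨(j, i), h⟩ else 0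

lemma ofFun_mem {N : ℕ} (f : Idx N → ℂ) : ofFun f ∈ antisymMat N := by
  show (ofFun f)ᵀ = -(ofFun f)
  ext i j
  simp only [Matrix.transpose_apply, Matrix.neg_apply, ofFun, Matrix.of_apply]
  rcases lt_trichotomy i j with h | h | h
  · rw [dif_neg (asymm h), dif_pos h, dif_pos h]
  · subst h
    simp
  · rw [dif_pos h, dif_neg (asymm h), dif_pos h, neg_neg]

/-- The coordinate equivalence. -/
noncomputable def eqv (N : ℕ) : antisymMat N ≃ₗ[ℂ] (Idx N → ℂ) where
  toFun A := fun p => (A : Matrix (Fin N) (Fin N) ℂ) p.1.1 p.1.2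
  map_add' A B := rfl
  map_smul' c A := rfl
  invFun f := ⟨ofFun f, ofFun_mem f⟩
  left_inv := by
    rintro ⟨A, hA⟩
    apply Subtype.ext
    ext i j
    have h2 : ∀ a b, A b a = -A a b := fun a b => congrFun (congrFun (mem_antisym N hA) a) b
    simp only [ofFun, Matrix.of_apply]
    rcases lt_trichotomy i j with h | h | h
    · rw [dif_pos h]
    · subst h
      rw [dif_neg (lt_irrefl i), dif_neg (lt_irrefl i)]
      have h3 : A i i = 0 := by linear_combination (h2 i i) / 2
      exact h3.symm
    · rw [dif_neg (asymm h), dif_pos h]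
      exact (neg_eq_iff_eq_neg.mpr (h2 i j)).symm ▸ rfl
  right_inv := by
    intro f
    funext p
    obtain ⟨⟨i, j⟩, h⟩ := p
    simp only [ofFun, Matrix.of_apply]
    rw [dif_pos h]

noncomputable def bAnti (N : ℕ) : Module.Basis (Idx N) ℂ (antisymMat N) := Module.Basis.ofEquivFun (eqv N)

lemma card_idx (N : ℕ) : Fintype.card (Idx N) = N * (N - 1) / 2 := by
  rw [Fintype.card_congr (Equiv.subtypeProdEquivSigmaSubtype (fun i j : Fin N => i < j))]
  rw [Fintype.card_sigma]
  have h1 : ∀ i : Fin N, Fintype.card {j : Fin N // i < j} = N - 1 - i := by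
    intro i
    rw [show Fintype.card { j // i < j } = Fintype.card (Set.Ioi i) from
      Fintype.card_congr (Equiv.refl _)]
    exact (Fintype.card_Ioi i).trans (Fin.card_Ioi (a := i))
  simp_rw [h1]
  rw [Fin.sum_univ_eq_sum_range (fun i => N - 1 - i)]
  rw [Finset.sum_range_reflect (fun i => i) N]
  exact Finset.sum_range_id N


lemma eqv_apply {N : ℕ} (A : antisymMat N) (p : Idx N) :
    eqv N A p = (A : Matrix (Fin N) (Fin N) ℂ) p.1.1 p.1.2 := rfl

lemma eqv_symm_apply {N : ℕ} (f : Idx N → ℂ) :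
    ((eqv N).symm f : Matrix (Fin N) (Fin N) ℂ) = ofFun f := rfl

lemma rep_coe (N : ℕ) (U : Matrix (Fin N) (Fin N) ℂ) (A : antisymMat N) :
    ((rep N U) A : Matrix (Fin N) (Fin N) ℂ) = U * (A : Matrix (Fin N) (Fin N) ℂ) * Uᵀ := by
  rw [rep, LinearMap.restrict_apply]
  exact conjT_apply N U A

lemma prod_pairs {N : ℕ} (d : Fin N → ℂ) :
    ∏ p : Idx N, (d p.1.1 * d p.1.2) = (∏ i, d i) ^ (N - 1) := by
  classical
  have h0 : ∏ p : Idx N, (d p.1.1 * d p.1.2)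
      = ∏ p ∈ Finset.univ.filter (fun p : Fin N × Fin N => p.1 < p.2), (d p.1 * d p.2) :=
    (Finset.prod_subtype _ (fun p => by simp) (fun p : Fin N × Fin N => d p.1 * d p.2)).symm
  rw [h0, Finset.prod_mul_distrib]
  have hswap : ∏ p ∈ Finset.univ.filter (fun p : Fin N × Fin N => p.1 < p.2), d p.2
      = ∏ p ∈ Finset.univ.filter (fun p : Fin N × Fin N => p.2 < p.1), d p.1 := by
    refine Finset.prod_nbij' (fun p => Prod.swap p) (fun p => Prod.swap p) ?_ ?_ ?_ ?_ ?_
    · intro p hp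
      simp only [Finset.mem_filter, Finset.mem_univ, true_and] at hp ⊢
      exact hp
    · intro p hp
      simp only [Finset.mem_filter, Finset.mem_univ, true_and] at hp ⊢
      exact hp
    · intro p _; exact Prod.swap_swap p
    · intro p _; exact Prod.swap_swap p
    · intro p _; rfl
  rw [hswap, ← Finset.prod_union (by
    rw [Finset.disjoint_filter]
    intro p _ h1 h2
    exact absurd h1 (asymm h2))]
  rw [← Finset.filter_or]
  have hfe : Finset.univ.filter (fun p : Fin N × Fin N => p.1 < p.2 ∨ p.2 < p.1)
      = Finset.univ.filter (fun p : Fin N × Fin N => p.1 ≠ p.2) := by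
    apply Finset.filter_congr
    intro p _
    exact ne_iff_lt_or_gt.symm
  rw [hfe, Finset.prod_filter, Fintype.prod_prod_type]
  have hinner : ∀ i : Fin N, (∏ j : Fin N, if i ≠ j then d i else 1) = d i ^ (N - 1) := by
    intro i
    rw [Finset.prod_ite]
    rw [Finset.prod_const, Finset.prod_const_one, mul_one]
    congr 1
    have hne : Finset.univ.filter (fun j : Fin N => i ≠ j) = Finset.univ.erase i := by
      ext j
      simp [eq_comm, Ne]
    rw [hne, Finset.card_erase_of_mem (Finset.mem_univ i), Finset.card_univ, Fintype.card_fin]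
  simp_rw [hinner]
  rw [Finset.prod_pow]

lemma toMatrix_rep_diagonal (N : ℕ) (d : Fin N → ℂ) :
    LinearMap.toMatrix (bAnti N) (bAnti N) (rep N (Matrix.diagonal d))
      = Matrix.diagonal (fun p : Idx N => d p.1.1 * d p.1.2) := by
  ext p q
  obtain ⟨⟨i, j⟩, h⟩ := p
  rw [LinearMap.toMatrix_apply]
  simp only [bAnti, Module.Basis.ofEquivFun_repr_apply, Module.Basis.coe_ofEquivFun]
  rw [eqv_apply, rep_coe, eqv_symm_apply, Matrix.diagonal_transpose,
    Matrix.mul_diagonal, Matrix.diagonal_mul]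
  simp only [ofFun, Matrix.of_apply]
  rw [dif_pos h, Pi.single_apply, Matrix.diagonal_apply]
  split_ifs with h1
  · ring
  · ring

lemma D_diagonal (N : ℕ) (d : Fin N → ℂ) :
    D N (Matrix.diagonal d) = (∏ i, d i) ^ (N - 1) := by
  rw [D, ← LinearMap.det_toMatrix (bAnti N), toMatrix_rep_diagonal, Matrix.det_diagonal,
    prod_pairs]

lemma D_transvection (N : ℕ) (i j : Fin N) (hij : i ≠ j) (c : ℂ) :
    D N (Matrix.transvection i j c) = 1 := by
  have key : ∀ a : ℂ, a ≠ 0 → ∀ c : ℂ,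
      D N (Matrix.transvection i j (a * c)) = D N (Matrix.transvection i j c) := by
    intro a ha c
    set v : Fin N → ℂ := Function.update (fun _ : Fin N => (1:ℂ)) i a with hv
    set w : Fin N → ℂ := Function.update (fun _ : Fin N => (1:ℂ)) i a⁻¹ with hw
    have hdd : Matrix.diagonal v * Matrix.diagonal w = 1 := by
      rw [Matrix.diagonal_mul_diagonal]
      have hvw : (fun k => v k * w k) = fun _ => (1:ℂ) := by
        funext k
        show v k * w k = 1
        rw [hv, hw]
        rcases eq_or_ne k i with rfl | hk
        · rw [Function.update_self, Function.update_self]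
          exact mul_inv_cancel₀ ha
        · rw [Function.update_of_ne hk, Function.update_of_ne hk, one_mul]
      rw [hvw, Matrix.diagonal_one]
    have hstd : Matrix.diagonal v * Matrix.single i j c * Matrix.diagonal w
        = Matrix.single i j (a * c) := by
      ext x y
      rw [Matrix.mul_diagonal, Matrix.diagonal_mul]
      simp only [Matrix.single, Matrix.of_apply, hv, hw, Function.update_apply]
      rcases eq_or_ne x i with rfl | hx
      · rcases eq_or_ne y j with rfl | hy
        · simp [Ne.symm hij]
        · simp [Ne.symm hy]
      · simp [Ne.symm hx]
    have hd : Matrix.diagonal v * Matrix.transvection i j c * Matrix.diagonal w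
        = Matrix.transvection i j (a * c) := by
      rw [Matrix.transvection, Matrix.mul_add, Matrix.add_mul, Matrix.mul_one, hdd, hstd,
        Matrix.transvection]
    have hDdd : D N (Matrix.diagonal v) * D N (Matrix.diagonal w) = 1 := by
      rw [← D_mul, hdd, D_one]
    have := congrArg (D N) hd
    rw [D_mul, D_mul] at this
    rw [← this]
    linear_combination D N (Matrix.transvection i j c) * hDdd
  by_cases hc : c = 0
  · rw [hc, Matrix.transvection_zero, D_one]
  · have h3 : D N (Matrix.transvection i j (-c)) = D N (Matrix.transvection i j c) := by
      have := key (-1) (by norm_num) c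
      rwa [neg_one_mul] at this
    have h2 : D N (Matrix.transvection i j c) * D N (Matrix.transvection i j c) = 1 := by
      nth_rewrite 2 [← h3]
      rw [← D_mul, Matrix.transvection_mul_transvection_same _ _ hij, add_neg_cancel,
        Matrix.transvection_zero, D_one]
    have h4 : D N (Matrix.transvection i j c) * D N (Matrix.transvection i j c)
        = D N (Matrix.transvection i j c) := by
      rw [← D_mul, Matrix.transvection_mul_transvection_same _ _ hij,
        show c + c = 2 * c by ring]
      exact key 2 two_ne_zero c
    exact h4.symm.trans h2

lemma D_eq (N : ℕ) (M : Matrix (Fin N) (Fin N) ℂ) : D N M = M.det ^ (N - 1) := by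
  apply Matrix.diagonal_transvection_induction
    (fun M => D N M = M.det ^ (N - 1)) M
  · intro d _
    rw [D_diagonal, Matrix.det_diagonal]
  · rintro ⟨i, j, hij, c⟩
    show D N (Matrix.transvection i j c) = (Matrix.transvection i j c).det ^ (N - 1)
    rw [D_transvection N i j hij, Matrix.det_transvection_of_ne i j hij, one_pow]
  · intro A B hA hB
    rw [D_mul, hA, hB, Matrix.det_mul, mul_pow]

end AntisymAux

/-- The two-index antisymmetric representation of `SU(N)`: the antisymmetric matrices form a
subspace of dimension `N(N-1)/2`, stable under `A ↦ U A Uᵀ`, and the induced endomorphism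
has determinant one. -/
theorem antisym_rep_det_one (N : ℕ) (hN : 0 < N) :
    Module.finrank ℂ (antisymMat N) = N * (N - 1) / 2 ∧
      ∀ U : Matrix.specialUnitaryGroup (Fin N) ℂ,
        ∃ h : ∀ x ∈ antisymMat N,
            conjT N (U : Matrix (Fin N) (Fin N) ℂ) x ∈ antisymMat N,
          LinearMap.det ((conjT N (U : Matrix (Fin N) (Fin N) ℂ)).restrict h) = 1 := by
  constructor
  · rw [LinearEquiv.finrank_eq (AntisymAux.eqv N), Module.finrank_fintype_fun_eq_card,
      AntisymAux.card_idx]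
  · intro U
    refine ⟨AntisymAux.conjT_mem N _, ?_⟩
    have hdet : Matrix.det (U : Matrix (Fin N) (Fin N) ℂ) = 1 :=
      (Matrix.mem_specialUnitaryGroup_iff.mp U.2).2
    have hD : AntisymAux.D N (U : Matrix (Fin N) (Fin N) ℂ) = 1 := by
      rw [AntisymAux.D_eq, hdet, one_pow]
    exact hD
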